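/- For all u, v ∈ 𝕍, if u < v in the lexicographic order, then val(u) < val(v) as rational numbers. -/
import Mathlib


/-- The three truth symbols F, 0 (Z), T. -/
inductive TSym : Type
  | F | Z | T
deriving DecidableEq

open TSym

/-- The operation u ≫ v on lists of symbols. -/
def lexOp (u v : List TSym) : List TSym :=
  if u = [F] ∧ v = [F] then [F]
  else if u = [T] ∧ v = [T] then [T]
  else Z :: (u ++ v)

/-- The truth domain 𝕍 as an inductive predicate. -/
inductive Vmem : List TSym → Prop
  | F : Vmem [F]
  | T : Vmem [T]
  | op {u v : List TSym} : Vmem u → Vmem v → Vmem (lexOp u v)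

def symRank : TSym → ℕ
  | F => 0 | Z => 1 | T => 2

/-- The order F < 0 < T on symbols. -/
def symLt (a b : TSym) : Prop := symRank a < symRank b

/-- Lexicographic order on lists induced by F < 0 < T. -/
def listLt (u v : List TSym) : Prop := List.Lex symLt u v

/-- Pointwise negation F ↦ T, T ↦ F, 0 ↦ 0. -/
def symNeg : TSym → TSym
  | F => T | T => F | Z => Z

def negList (v : List TSym) : List TSym := v.map symNeg

def symVal : TSym → ℚ
  | F => -1 | Z => 0 | T => 1

/-- val([u₁,…,u_n]) = Σ symVal(u_i) · (1/3)^(i-1). -/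
def val : List TSym → ℚ
  | [] => 0
  | a :: t => symVal a + val t / 3

open Classical in
/-- Lexicographic minimum. -/
noncomputable def minL (u v : List TSym) : List TSym := if listLt u v then u else v

open Classical in
/-- Lexicographic maximum. -/
noncomputable def maxL (u v : List TSym) : List TSym := if listLt u v then v else u

lemma vmem_cases {w : List TSym} (hw : Vmem w) :
    w = [F] ∨ w = [T] ∨ ∃ p q, Vmem p ∧ Vmem q ∧ w = Z :: (p ++ q) := by
  induction hw with
  | F => left; rfl
  | T => right; left; rfl
  | @op u v hu hv _ _ =>
    unfold lexOp
    split
    · left; rfl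
    · split
      · right; left; rfl
      · right; right; exact ⟨u, v, hu, hv, rfl⟩

lemma vmem_ne_nil {w : List TSym} (hw : Vmem w) : w ≠ [] := by
  rcases vmem_cases hw with h | h | ⟨p, q, _, _, h⟩ <;> subst h <;> simp

lemma vmem_prefix_eq : ∀ n : ℕ, ∀ u v : List TSym, Vmem u → Vmem v →
    v.length ≤ n → u <+: v → u = v := by
  intro n
  induction n with
  | zero =>
    intro u v _ hv hlen _
    exact absurd (List.length_eq_zero_iff.mp (Nat.le_zero.mp hlen)) (vmem_ne_nil hv)
  | succ n ih =>
    intro u v hu hv hlen hpre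
    have singl : ∀ x : TSym, v = [x] → u = v := by
      intro x hx
      subst hx
      rcases vmem_cases hu with hu' | hu' | ⟨p', q', hp', hq', hu'⟩ <;>
        (subst hu'; rcases hpre with ⟨t, ht⟩; first | rfl | simp at ht) <;>
        simp_all
    rcases vmem_cases hv with hv' | hv' | ⟨p, q, hp, hq, hv'⟩
    · exact singl _ hv'
    · exact singl _ hv'
    · subst hv'
      rcases vmem_cases hu with hu' | hu' | ⟨p', q', hp', hq', hu'⟩
      · subst hu'; rcases hpre with ⟨t, ht⟩; simp at ht
      · subst hu'; rcases hpre with ⟨t, ht⟩; simp at ht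
      · subst hu'
        have hpre2 : p' ++ q' <+: p ++ q := by
          rcases hpre with ⟨t, ht⟩
          exact ⟨t, by simpa using ht⟩
        have hlpq : (p ++ q).length ≤ n := by simp only [List.length_cons, List.length_append] at hlen ⊢; omega
        have h1 : p' <+: p ++ q := (List.prefix_append p' q').trans hpre2
        have h2 : p <+: p ++ q := List.prefix_append p q
        have hpp : p' = p := by
          rcases List.prefix_or_prefix_of_prefix h1 h2 with hc | hc
          · exact ih p' p hp' hp (le_trans (by simpa using Nat.le_add_right p.length q.length) hlpq) hc
          · exact (ih p p' hp hp' (le_trans h1.length_le hlpq) hc).symm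
        subst hpp
        have hqq : q' <+: q := (List.prefix_append_right_inj p').mp hpre2
        have : q' = q := ih q' q hq' hq (le_trans (by simp) hlpq) hqq
        rw [this]

lemma lex_decomp {r : TSym → TSym → Prop} {u v : List TSym} (h : List.Lex r u v) :
    (u <+: v ∧ u ≠ v) ∨ ∃ c a b s t, r a b ∧ u = c ++ a :: s ∧ v = c ++ b :: t := by
  induction h with
  | nil => left; exact ⟨List.nil_prefix, by simp⟩
  | @cons a l₁ l₂ h ih =>
    rcases ih with ⟨hp, hne⟩ | ⟨c, a', b, s, t, hr, h1, h2⟩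
    · left
      exact ⟨List.cons_prefix_cons.mpr ⟨rfl, hp⟩, by simpa using hne⟩
    · right; exact ⟨a :: c, a', b, s, t, hr, by simp [h1], by simp [h2]⟩
  | @rel a l₁ b l₂ hr => right; exact ⟨[], a, b, l₁, l₂, hr, rfl, rfl⟩

lemma val_bound (l : List TSym) : |val l| ≤ 3/2 - (3/2) * (1/3 : ℚ) ^ l.length := by
  induction l with
  | nil => simp [val]
  | cons a t ih =>
    have ha : |symVal a| ≤ 1 := by cases a <;> simp [symVal]
    have h1 : |val (a :: t)| ≤ |symVal a| + |val t| / 3 := by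
      simp only [val]
      calc |symVal a + val t / 3| ≤ |symVal a| + |val t / 3| := abs_add_le _ _
        _ = |symVal a| + |val t| / 3 := by rw [abs_div]; norm_num
    have : (1/3 : ℚ) ^ (a :: t).length = (1/3) ^ t.length / 3 := by
      simp [pow_succ]; ring
    rw [this]
    linarith

lemma val_abs_lt (l : List TSym) : |val l| < 3/2 := by
  have := val_bound l
  have hp : (0 : ℚ) < (3/2) * (1/3) ^ l.length := by positivity
  linarith

lemma val_lt_of_symLt {a b : TSym} (hab : symLt a b) (s t : List TSym) :
    val (a :: s) < val (b :: t) := by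
  have hs : val s < 3/2 := (abs_lt.mp (val_abs_lt s)).2
  have ht : -(3/2) < val t := (abs_lt.mp (val_abs_lt t)).1
  have hab' : symVal a + 1 ≤ symVal b := by
    cases a <;> cases b <;> simp [symLt, symRank, symVal] at hab ⊢ <;> norm_num
  simp only [val]
  linarith

lemma val_append (c x : List TSym) :
    val (c ++ x) = val c + val x * (1/3 : ℚ) ^ c.length := by
  induction c with
  | nil => simp [val]
  | cons a t ih =>
    simp only [List.cons_append, val, List.append_eq]
    rw [ih, List.length_cons, pow_succ]
    ring

theorem val_strict_mono (u v : List TSym) (hu : Vmem u) (hv : Vmem v)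
    (h : listLt u v) : val u < val v := by
  rcases lex_decomp h with ⟨hp, hne⟩ | ⟨c, a, b, s, t, hr, h1, h2⟩
  · exact absurd (vmem_prefix_eq v.length u v hu hv le_rfl hp) hne
  · subst h1; subst h2
    rw [val_append, val_append]
    have hlt := val_lt_of_symLt hr s t
    have hpow : (0 : ℚ) < (1/3 : ℚ) ^ c.length := by positivity
    have := mul_lt_mul_of_pos_right hlt hpow
    linarith
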